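/- Let S be exemplar with dist_TD(S, T) ≤ k, and let S', T' be obtained from S and T respectively by replacing each maximal (S,T)-stable substring by a single fresh character (the same character for all occurrences of the same maximal stable substring). Then dist_TD(S', T') ≤ k, |S'| ≤ 2k + 1, and |T'| ≤ (2k + 1)·2^k. -/

import Mathlib

open scoped Classical

variable {α : Type*}

/-- A single tandem duplication: `AXB ⇒ AXXB` with `X` nonempty. -/
def TDStep (S T : List α) : Prop :=
  ∃ A X B : List α, X ≠ [] ∧ S = A ++ X ++ B ∧ T = A ++ X ++ X ++ B

/-- `TDk k S T`: `T` is obtained from `S` by exactly `k` tandem duplications. -/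
def TDk : ℕ → List α → List α → Prop
  | 0, S, T => S = T
  | n+1, S, T => ∃ U, TDStep S U ∧ TDk n U T

/-- The tandem duplication distance, `⊤` if `T` is not reachable from `S`. -/
noncomputable def distTD (S T : List α) : ℕ∞ :=
  sInf {n : ℕ∞ | ∃ m : ℕ, n = m ∧ TDk m S T}

/-- The pair `xy` is stable in `T`: every occurrence of `x` in `T` is followed
by `y`, and every occurrence of `y` is preceded by `x`. -/
def StablePair (x y : α) (T : List α) : Prop :=
  (∀ A B : List α, T = A ++ x :: B → ∃ B', B = y :: B') ∧
  (∀ A B : List α, T = A ++ y :: B → ∃ A', A = A' ++ [x])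

/-- The maximal `(S,T)`-stable substrings of `S`, obtained by splitting `S` at
every consecutive pair that is not stable in `T`. -/
noncomputable def blocks (S T : List α) : List (List α) :=
  S.splitBy (fun a b => decide (StablePair a b T))

/-- The number of maximal `(S,T)`-stable substrings of a nonempty `S`: one more
than the number of consecutive pairs of `S` that are not stable in `T`. -/
noncomputable def numStable (S T : List α) : ℕ :=
  (blocks S T).length

/-! ### Adjacency -/

def Adj (W : List α) (x y : α) : Prop := ∃ C D : List α, W = C ++ x :: y :: D

lemma adj_append_left {W : List α} {x y : α} (P : List α) (h : Adj W x y) :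
    Adj (P ++ W) x y := by
  obtain ⟨C, D, rfl⟩ := h
  exact ⟨P ++ C, D, by simp⟩

lemma adj_append_right {W : List α} {x y : α} (P : List α) (h : Adj W x y) :
    Adj (W ++ P) x y := by
  obtain ⟨C, D, rfl⟩ := h
  exact ⟨C, D ++ P, by simp⟩

lemma adj_of_infix {W W' : List α} {x y : α} (h : W <:+: W') (ha : Adj W x y) :
    Adj W' x y := by
  obtain ⟨s, t, hh⟩ := h
  rw [← hh]
  have := adj_append_left s (adj_append_right t ha)
  simpa [List.append_assoc] using this

lemma adj_cons_cons {x y : α} (D : List α) : Adj (x :: y :: D) x y := ⟨[], D, rfl⟩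

private lemma no_dup_mid {E w' F : List α} {h : α}
    (hS : (E ++ h :: (w' ++ h :: F)).Nodup) : False := by
  rw [List.nodup_append] at hS
  have := hS.2.1
  rw [List.nodup_cons] at this
  exact this.1 (by simp)

/-- occurrences in a nodup list are unique -/
lemma occ_unique {S : List α} (hS : S.Nodup) {h : α} {E F E' F' : List α}
    (h1 : S = E ++ h :: F) (h2 : S = E' ++ h :: F') : E = E' ∧ F = F' := by
  subst h1
  rcases List.append_eq_append_iff.mp h2 with ⟨w, hw1, hw2⟩ | ⟨w, hw1, hw2⟩
  · cases w with
    | nil =>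
      simp only [List.append_nil] at hw1
      simp only [List.nil_append] at hw2
      exact ⟨hw1.symm, (List.cons.injEq _ _ _ _ ▸ hw2).2⟩
    | cons a w' =>
      exfalso
      rw [List.cons_append] at hw2
      injection hw2 with e1 e2
      subst e2
      cases e1
      exact no_dup_mid hS
  · cases w with
    | nil =>
      simp only [List.append_nil] at hw1
      simp only [List.nil_append] at hw2
      exact ⟨hw1, ((List.cons.injEq _ _ _ _ ▸ hw2).2).symm⟩
    | cons a w' =>
      exfalso
      rw [List.cons_append] at hw2
      injection hw2 with e1 e2
      subst e2
      cases e1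
      rw [hw1] at hS
      refine no_dup_mid (E := E') (w' := w') (F := F) (h := h) ?_
      simpa [List.append_assoc] using hS

lemma pred_unique {S : List α} (hS : S.Nodup) {p q h : α}
    (h1 : Adj S p h) (h2 : Adj S q h) : p = q := by
  obtain ⟨C, D, rfl⟩ := h1
  obtain ⟨C', D', hE⟩ := h2
  have key := occ_unique hS (h := h) (E := C ++ [p]) (F := D) (E' := C' ++ [q]) (F' := D')
    (by simp) (by rw [hE]; simp)
  have h3 := (List.append_inj' key.1 (by simp)).2
  simpa using h3

lemma succ_unique {S : List α} (hS : S.Nodup) {a b c : α}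
    (h1 : Adj S a b) (h2 : Adj S a c) : b = c := by
  obtain ⟨C, D, rfl⟩ := h1
  obtain ⟨C', D', hE⟩ := h2
  have key := occ_unique hS (h := a) (E := C) (F := b :: D) (E' := C') (F' := c :: D')
    rfl (by rw [hE])
  have h3 := key.2
  exact (List.cons.injEq _ _ _ _ ▸ h3).1

lemma adj_ne_getLast {S : List α} (hS : S.Nodup) {a b x : α}
    (h : Adj S a b) (hx : S.getLast? = some x) : x ≠ a := by
  obtain ⟨C, D, rfl⟩ := h
  have hx' : (C ++ a :: b :: D).getLast? = (b :: D).getLast? := by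
    rw [show C ++ a :: b :: D = (C ++ [a]) ++ (b :: D) by simp,
      List.getLast?_append]
    simp [List.getLast?_eq_getLast (List.cons_ne_nil b D)]
  rw [hx'] at hx
  have hxm : x ∈ b :: D := List.mem_of_getLast? hx
  intro hxa
  subst hxa
  rw [show C ++ x :: b :: D = (C ++ [x]) ++ (b :: D) by simp, List.nodup_append] at hS
  exact hS.2.2 x (by simp) x hxm rfl

lemma adj_ne_head {S : List α} (hS : S.Nodup) {a b x : α}
    (h : Adj S a b) (hx : S.head? = some x) : x ≠ b := by
  obtain ⟨C, D, rfl⟩ := h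
  have hxm : x ∈ C ++ [a] := by
    cases C with
    | nil => simp at hx; simp [hx]
    | cons c C' => simp at hx; simp [hx]
  rw [show C ++ a :: b :: D = (C ++ [a]) ++ (b :: D) by simp, List.nodup_append] at hS
  intro hxb
  exact hS.2.2 x hxm x (by simp [hxb]) rfl

/-! ### Stability eliminators -/

lemma stable_pred {p d x : α} {T : List α} (hst : StablePair p d T)
    (h : Adj T x d) : x = p := by
  obtain ⟨C, D, rfl⟩ := h
  obtain ⟨A', hA'⟩ := hst.2 (C ++ [x]) D (by simp)
  have := (List.append_inj' hA' (by simp)).2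
  simpa using this

lemma stable_succ {p d y : α} {T : List α} (hst : StablePair p d T)
    (h : Adj T p y) : y = d := by
  obtain ⟨C, D, rfl⟩ := h
  obtain ⟨B', hB'⟩ := hst.1 C (y :: D) rfl
  exact (List.cons.injEq _ _ _ _ ▸ hB').1

/-! ### TD step adjacency lemmas -/

lemma tdstep_adj {U V : List α} (h : TDStep U V) {x y : α} (ha : Adj U x y) :
    Adj V x y := by
  obtain ⟨A, X, B, hX, rfl, rfl⟩ := h
  obtain ⟨C, D, hCD⟩ := ha
  rw [List.append_assoc] at hCD
  rcases List.append_eq_append_iff.mp hCD with ⟨w, hw1, hw2⟩ | ⟨w, hw1, hw2⟩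
  · -- C = A ++ w, X ++ B = w ++ x :: y :: D : adjacency inside X ++ B
    have : Adj (X ++ B) x y := ⟨w, D, hw2⟩
    have := adj_append_left (A ++ X) this
    simpa [List.append_assoc] using this
  · -- A = C ++ w, x :: y :: D = w ++ (X ++ B)
    cases w with
    | nil =>
      simp only [List.nil_append] at hw2
      subst hw1
      have : Adj (X ++ B) x y := ⟨[], D, by simp [hw2]⟩
      have := adj_append_left (C ++ X) this
      simpa [List.append_assoc] using this
    | cons a w' =>
      cases w' with
      | nil =>
        -- w = [x]; y :: D = X ++ B
        rw [List.cons_append] at hw2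
        injection hw2 with e1 e2
        subst e1
        cases X with
        | nil => exact absurd rfl hX
        | cons x0 X' =>
          rw [List.cons_append] at e2
          injection e2 with f1 f2
          subst f1
          refine ⟨C, X' ++ (y :: X') ++ B, ?_⟩
          rw [hw1]
          simp
      | cons b w'' =>
        rw [List.cons_append, List.cons_append] at hw2
        injection hw2 with e1 e2
        injection e2 with e3 e4
        subst e1; subst e3
        refine ⟨C, w'' ++ X ++ X ++ B, ?_⟩
        rw [hw1]
        simp

lemma tdstep_adj_rev {U V : List α} (h : TDStep U V) :
    ∃ p : α × α, ∀ x y : α, Adj V x y → Adj U x y ∨ (x, y) = p := by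
  obtain ⟨A, X, B, hX, rfl, rfl⟩ := h
  refine ⟨(X.getLast hX, X.head hX), fun x y ha => ?_⟩
  obtain ⟨C, D, hCD⟩ := ha
  rw [List.append_assoc, List.append_assoc] at hCD
  -- A ++ (X ++ (X ++ B)) = C ++ x :: y :: D
  rcases List.append_eq_append_iff.mp hCD with ⟨w, hw1, hw2⟩ | ⟨w, hw1, hw2⟩
  · -- C = A ++ w, X ++ (X ++ B) = w ++ x :: y :: D
    rcases List.append_eq_append_iff.mp hw2 with ⟨v, hv1, hv2⟩ | ⟨v, hv1, hv2⟩
    · -- w = X ++ v, X ++ B = v ++ x :: y :: D : inside X ++ B, suffix of U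
      left
      have : Adj (X ++ B) x y := ⟨v, D, hv2⟩
      have := adj_append_left A this
      simpa [List.append_assoc] using this
    · -- X = w ++ v, x :: y :: D = v ++ (X ++ B)
      cases v with
      | nil =>
        -- X = w;  x :: y :: D = X ++ B : inside X ++ B again
        left
        simp only [List.nil_append] at hv2
        have : Adj (X ++ B) x y := ⟨[], D, by simp [hv2]⟩
        have := adj_append_left A this
        simpa [List.append_assoc] using this
      | cons a v' =>
        cases v' with
        | nil =>
          -- v = [x], X = w ++ [x] so x = last X; y :: D = X ++ B so y = head X
          right
          rw [List.cons_append] at hv2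
          injection hv2 with e1 e2
          subst e1
          have hlast : X.getLast hX = x := by
            have h5 : X.getLast? = some x := by
              rw [hv1]; simp [List.getLast?_append]
            rw [List.getLast?_eq_getLast hX] at h5
            injection h5
          have hhead : X.head hX = y := by
            cases X with
            | nil => exact absurd rfl hX
            | cons x0 X' =>
              rw [List.cons_append] at e2
              injection e2 with f1 f2
              simp [f1]
          rw [hlast, hhead]
        | cons b v'' =>
          -- X = w ++ x :: y :: v'' : adjacency inside X
          left
          rw [List.cons_append, List.cons_append] at hv2
          injection hv2 with e1 e2
          injection e2 with e3 e4
          subst e1; subst e3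
          refine ⟨A ++ w, v'' ++ B, ?_⟩
          rw [hv1]
          simp
  · -- A = C ++ w, x :: y :: D = w ++ (X ++ (X ++ B))
    cases w with
    | nil =>
      simp only [List.nil_append] at hw2
      cases X with
      | nil => exact absurd rfl hX
      | cons x0 X' =>
        rw [List.cons_append] at hw2
        injection hw2 with e1 e2
        subst e1
        cases X' with
        | nil =>
          have f1 : y = x := by simpa using congrArg List.head? e2
          exact Or.inr (by simp [f1])
        | cons x1 X'' =>
          have f1 : y = x1 := by simpa using congrArg List.head? e2
          subst f1
          exact Or.inl ⟨C, X'' ++ B, by rw [hw1]; simp⟩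
    | cons a w' =>
      cases w' with
      | nil =>
        -- w = [x]: last A = x, y = head (X ++ X ++ B) = head X
        left
        rw [List.cons_append] at hw2
        injection hw2 with e1 e2
        subst e1
        cases X with
        | nil => exact absurd rfl hX
        | cons x0 X' =>
          rw [List.cons_append] at e2
          injection e2 with f1 f2
          subst f1
          exact ⟨C, X' ++ B, by rw [hw1]; simp⟩
      | cons b w'' =>
        left
        rw [List.cons_append, List.cons_append] at hw2
        injection hw2 with e1 e2
        injection e2 with e3 e4
        subst e1; subst e3
        exact ⟨C, w'' ++ X ++ B, by rw [hw1]; simp⟩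

/-! ### step invariants -/

lemma tdstep_head? {U V : List α} (h : TDStep U V) : U.head? = V.head? := by
  obtain ⟨A, X, B, hX, rfl, rfl⟩ := h
  cases X with
  | nil => exact absurd rfl hX
  | cons x X' => simp [List.head?_append]

lemma tdstep_getLast? {U V : List α} (h : TDStep U V) : U.getLast? = V.getLast? := by
  obtain ⟨A, X, B, hX, rfl, rfl⟩ := h
  have hXB : (X ++ B) ≠ [] := fun hh => hX (List.append_eq_nil_iff.mp hh).1
  rw [List.append_assoc, List.getLast?_append, List.append_assoc, List.append_assoc,
    List.getLast?_append]
  rw [List.getLast?_append]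
  cases hb : B.getLast? with
  | none =>
    have hB : B = [] := by cases B with | nil => rfl | cons b B' => simp [List.getLast?_eq_getLast (List.cons_ne_nil b B')] at hb
    subst hB
    simp [List.getLast?_append]
  | some b => simp [List.getLast?_append, hb]

lemma tdstep_length {U V : List α} (h : TDStep U V) : V.length ≤ 2 * U.length := by
  obtain ⟨A, X, B, hX, rfl, rfl⟩ := h
  simp only [List.length_append]
  omega

/-! ### chain versions -/

lemma tdk_adj {m : ℕ} {U W : List α} (h : TDk m U W) {x y : α} (ha : Adj U x y) :
    Adj W x y := by
  induction m generalizing U with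
  | zero => exact h ▸ ha
  | succ n ih =>
    obtain ⟨V, hstep, hk⟩ := h
    exact ih hk (tdstep_adj hstep ha)

lemma tdk_head? {m : ℕ} {U W : List α} (h : TDk m U W) : U.head? = W.head? := by
  induction m generalizing U with
  | zero => exact h ▸ rfl
  | succ n ih =>
    obtain ⟨V, hstep, hk⟩ := h
    exact (tdstep_head? hstep).trans (ih hk)

lemma tdk_getLast? {m : ℕ} {U W : List α} (h : TDk m U W) : U.getLast? = W.getLast? := by
  induction m generalizing U with
  | zero => exact h ▸ rfl
  | succ n ih =>
    obtain ⟨V, hstep, hk⟩ := h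
    exact (tdstep_getLast? hstep).trans (ih hk)

lemma tdk_adj_list {m : ℕ} {U W : List α} (h : TDk m U W) :
    ∃ L : List (α × α), L.length ≤ m ∧
      ∀ x y : α, Adj W x y → Adj U x y ∨ (x, y) ∈ L := by
  induction m generalizing U with
  | zero => exact ⟨[], by simp, fun x y ha => Or.inl (h ▸ ha)⟩
  | succ n ih =>
    obtain ⟨V, hstep, hk⟩ := h
    obtain ⟨L, hL, hLa⟩ := ih hk
    obtain ⟨p, hp⟩ := tdstep_adj_rev hstep
    refine ⟨p :: L, by simpa using hL, fun x y ha => ?_⟩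
    rcases hLa x y ha with hv | hl
    · rcases hp x y hv with hu | he
      · exact Or.inl hu
      · exact Or.inr (by simp [he])
    · exact Or.inr (by simp [hl])


/-! ### blocks lemmas -/

lemma blocks_flatten (S T : List α) : (blocks S T).flatten = S :=
  List.flatten_splitBy _ _

lemma blocks_ne_nil {S T : List α} {b : List α} (h : b ∈ blocks S T) : b ≠ [] :=
  List.ne_nil_of_mem_splitBy h

lemma blocks_infix {S T : List α} {b : List α} (h : b ∈ blocks S T) : b <:+: S :=
  blocks_flatten S T ▸ List.infix_of_mem_flatten h

lemma blocks_chain {S T : List α} {b : List α} (h : b ∈ blocks S T) :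
    List.Chain' (fun x y => StablePair x y T) b := by
  have := List.isChain_of_mem_splitBy h
  exact this.imp (fun x y hxy => by simpa using hxy)

/-- `d` is a good head: no stable predecessor in `S`. -/
def GoodHead (S T : List α) (d : α) : Prop :=
  ∀ p, Adj S p d → ¬StablePair p d T

lemma blockhead_good {S T : List α} (hS : S.Nodup) {b : List α} (hb : b ∈ blocks S T)
    {d : α} (hd : b.head? = some d) : GoodHead S T d := by
  obtain ⟨B₁, B₂, hB⟩ := List.append_of_mem hb
  have hbne : b ≠ [] := blocks_ne_nil hb
  have hflat : S = B₁.flatten ++ (b ++ B₂.flatten) := by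
    conv_lhs => rw [← blocks_flatten S T, hB]
    simp
  rcases B₁.eq_nil_or_concat with rfl | ⟨B₁', b₀, rfl⟩
  · -- b is the first block, d = head S
    intro p hadj hstab
    have hhead : S.head? = some d := by
      rw [hflat]
      simpa [List.head?_append] using Or.inl hd
    exact adj_ne_head hS hadj hhead rfl
  · -- previous block b₀
    have hchain : List.Chain'
        (fun a b => ∃ (ha : a ≠ []) (hb : b ≠ []),
          decide (StablePair (a.getLast ha) (b.head hb) T) = false) (blocks S T) :=
      List.isChain_getLast_head_splitBy (fun a b => decide (StablePair a b T)) S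
    rw [hB] at hchain
    obtain ⟨-, -, hmid⟩ := List.isChain_append.mp hchain
    have hfail := hmid b₀ (by simp [List.getLast?_concat]) b (by simp)
    obtain ⟨hb₀ne, hbne', hfalse⟩ := hfail
    -- b = d :: b.tail
    obtain ⟨bt, rfl⟩ : ∃ bt, b = d :: bt := by
      cases b with
      | nil => exact absurd rfl hbne
      | cons b0 bt => exact ⟨bt, by injection hd with h1; rw [h1]⟩
    have hadj₀ : Adj S (b₀.getLast hb₀ne) d := by
      refine ⟨B₁'.flatten ++ b₀.dropLast, bt ++ B₂.flatten, ?_⟩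
      rw [hflat]
      conv_lhs => rw [← List.dropLast_append_getLast hb₀ne]
      simp [List.concat_eq_append]
    intro p hadj hstab
    have hpq : p = b₀.getLast hb₀ne := pred_unique hS hadj hadj₀
    subst hpq
    have : (d :: bt).head hbne' = d := rfl
    rw [this] at hfalse
    simp only [decide_eq_false_iff_not] at hfalse
    exact hfalse hstab


/-! ### expansion -/

/-- Expansion of a list of block indices. -/
noncomputable def expandI (S T : List α) (U' : List ℕ) : List α :=
  U'.flatMap (fun j => (blocks S T).getD j [])

lemma expandI_nil (S T : List α) : expandI S T [] = [] := rfl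

lemma expandI_cons (S T : List α) (j : ℕ) (rest : List ℕ) :
    expandI S T (j :: rest) = (blocks S T).getD j [] ++ expandI S T rest := by
  simp [expandI]

lemma expandI_append (S T : List α) (P Q : List ℕ) :
    expandI S T (P ++ Q) = expandI S T P ++ expandI S T Q := by
  simp [expandI]

lemma getD_mem_blocks {S T : List α} {j : ℕ} (h : j < (blocks S T).length) :
    (blocks S T).getD j [] ∈ blocks S T := by
  rw [List.getD_eq_getElem _ _ h]
  exact List.getElem_mem h

lemma flatMap_range_getD (L : List (List α)) :
    (List.range L.length).flatMap (fun j => L.getD j []) = L.flatten := by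
  induction L with
  | nil => rfl
  | cons b L ih =>
    rw [List.length_cons, List.range_succ_eq_map, List.flatMap_cons, List.flatMap_map,
      List.flatten_cons, List.getD_cons_zero, ← ih]
    simp [List.getD_cons_succ, Nat.succ_eq_add_one]

lemma expandI_range (S T : List α) :
    expandI S T (List.range (blocks S T).length) = S := by
  rw [expandI, flatMap_range_getD, blocks_flatten]

/-- Splitting an expansion at a good head. -/
lemma expandI_split {S T : List α} (hS : S.Nodup) (U' : List ℕ)
    (hb : ∀ j ∈ U', j < (blocks S T).length) {D : List α}
    (hD : ∀ d, D.head? = some d → GoodHead S T d) :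
    ∀ C : List α, C ++ D = expandI S T U' →
    ∃ P Q, U' = P ++ Q ∧ C = expandI S T P ∧ D = expandI S T Q := by
  induction U' with
  | nil =>
    intro C hCD
    rw [expandI_nil] at hCD
    obtain ⟨rfl, rfl⟩ := List.append_eq_nil_iff.mp hCD
    exact ⟨[], [], rfl, rfl, rfl⟩
  | cons j rest ih =>
    intro C hCD
    have hj : j < (blocks S T).length := hb j (by simp)
    have hbmem := getD_mem_blocks hj
    rw [expandI_cons] at hCD
    rcases List.append_eq_append_iff.mp hCD.symm with ⟨w, hw1, hw2⟩ | ⟨w, hw1, hw2⟩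
    -- hCD.symm : (blocks S T).getD j [] ++ expandI S T rest = C ++ D
    · -- C = getD j ++ w, expandI rest = w ++ D
      obtain ⟨P', Q', hPQ, hCP, hDQ⟩ := ih (fun i hi => hb i (by simp [hi])) w hw2.symm
      refine ⟨j :: P', Q', by rw [hPQ]; rfl, ?_, hDQ⟩
      rw [expandI_cons, hw1, hCP]
    · -- getD j = C ++ w, D = w ++ expandI rest
      rcases eq_or_ne C [] with rfl | hCne
      · refine ⟨[], j :: rest, rfl, rfl, ?_⟩
        rw [expandI_cons]
        rw [List.nil_append] at hCD
        exact hCD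
      rcases eq_or_ne w [] with rfl | hwne
      · -- C = getD j
        obtain ⟨P', Q', hPQ, hCP, hDQ⟩ := ih (fun i hi => hb i (by simp [hi])) []
          (by simpa using hw2)
        refine ⟨j :: P', Q', by rw [hPQ]; rfl, ?_, hDQ⟩
        rw [expandI_cons, ← hCP, hw1]
        simp
      · -- C ≠ [], w ≠ [] : contradiction
        exfalso
        obtain ⟨C₁, c, rfl⟩ := C.eq_nil_or_concat.resolve_left hCne
        cases w with
        | nil => exact hwne rfl
        | cons d₀ wt =>
          have hstab : StablePair c d₀ T := by
            have hchain := blocks_chain hbmem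
            rw [hw1] at hchain
            obtain ⟨-, -, hmid⟩ := List.isChain_append.mp hchain
            exact hmid c (by simp [List.getLast?_concat]) d₀ (by simp)
          have hadj : Adj S c d₀ := by
            refine adj_of_infix (blocks_infix hbmem) ⟨C₁, wt, ?_⟩
            rw [hw1]
            simp
          have hgood : GoodHead S T d₀ := hD d₀ (by rw [hw2]; simp)
          exact hgood c hadj hstab


/-! ### adjacency shape helpers -/


lemma cons_head_tail_append {X : List α} (hX : X ≠ []) (B : List α) :
    X ++ B = X.head hX :: (X.tail ++ B) := by
  cases X with
  | nil => exact absurd rfl hX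
  | cons x t => simp

lemma adj_mid_head {A' Y B' : List α} (hY : Y ≠ []) (hB : B' ≠ []) :
    Adj (A' ++ Y ++ B') (Y.getLast hY) (B'.head hB) := by
  refine ⟨A' ++ Y.dropLast, B'.tail, ?_⟩
  conv_lhs => rw [← List.dropLast_append_getLast hY, ← List.cons_head_tail hB]
  simp

lemma adj_junction {A Y X B₂ : List α} (hY : Y ≠ []) (hX : X ≠ []) :
    Adj (A ++ Y ++ X ++ B₂) (Y.getLast hY) (X.head hX) := by
  refine ⟨A ++ Y.dropLast, X.tail ++ B₂, ?_⟩
  conv_lhs => rw [← List.dropLast_append_getLast hY]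
  simp only [List.append_assoc, List.singleton_append, List.cons_append]
  rw [cons_head_tail_append hX B₂]
  simp

lemma adj_last_head {A' X R B₂ : List α} {a : α} (hX : X ≠ []) :
    Adj ((A' ++ [a]) ++ X ++ R ++ B₂) a (X.head hX) := by
  refine ⟨A', X.tail ++ R ++ B₂, ?_⟩
  rw [show (A' ++ [a]) ++ X ++ R ++ B₂ = A' ++ [a] ++ (X ++ (R ++ B₂)) by simp,
    cons_head_tail_append hX (R ++ B₂)]
  simp

/-! ### the lifting lemma -/

lemma lift_step_good {S T : List α} (hS : S.Nodup)
    {U' : List ℕ} (hb : ∀ j ∈ U', j < (blocks S T).length)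
    (A X B₂ : List α) (hX : X ≠ [])
    (hflat : A ++ X ++ B₂ = expandI S T U')
    (hgoodX : GoodHead S T (X.head hX))
    (hadj : ∀ x y, Adj (A ++ X ++ X ++ B₂) x y → Adj T x y) :
    ∃ V', TDStep U' V' ∧ A ++ X ++ X ++ B₂ = expandI S T V' ∧
      ∀ j ∈ V', j < (blocks S T).length := by
  -- the head of B₂, if any, is also good
  have hgoodB₂ : ∀ d, B₂.head? = some d → GoodHead S T d := by
    intro d hd p hpadj hstab
    have hB₂ne : B₂ ≠ [] := by rintro rfl; simp at hd
    have hd' : B₂.head hB₂ne = d := by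
      rw [List.head?_eq_head hB₂ne] at hd; injection hd
    have h1 : Adj T (X.getLast hX) d := by
      have := adj_mid_head (A' := A ++ X) (Y := X) (B' := B₂) hX hB₂ne
      rw [hd'] at this
      exact hadj _ _ this
    have h2 : X.getLast hX = p := stable_pred hstab h1
    have h3 : Adj T p (X.head hX) := by
      have := adj_junction (A := A) (Y := X) (X := X) (B₂ := B₂) hX hX
      rw [h2] at this
      exact hadj _ _ this
    have h4 : X.head hX = d := stable_succ hstab h3
    exact hgoodX p (h4 ▸ hpadj) (h4 ▸ hstab)
  -- split off A
  obtain ⟨P, Q₂, hU', hAP, hXB⟩ := expandI_split hS U' hb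
    (D := X ++ B₂)
    (fun d hd => by
      rw [List.head?_append, List.head?_eq_head hX] at hd
      have hd' : X.head hX = d := by
        have : (some (X.head hX)).or B₂.head? = some (X.head hX) := rfl
        rw [this] at hd
        injection hd
      exact hd' ▸ hgoodX)
    A (by rw [← hflat]; simp)
  -- split off X
  have hbQ₂ : ∀ j ∈ Q₂, j < (blocks S T).length := fun j hj => hb j (by simp [hU', hj])
  obtain ⟨Q, R', hQ₂, hXQ, hBR⟩ := expandI_split hS Q₂ hbQ₂ (D := B₂) hgoodB₂ X hXB
  have hQne : Q ≠ [] := by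
    rintro rfl
    exact hX (by simpa [expandI_nil] using hXQ)
  refine ⟨P ++ Q ++ Q ++ R', ⟨P, Q, R', hQne, by rw [hU', hQ₂]; simp, by simp⟩, ?_, ?_⟩

  · rw [expandI_append, expandI_append, expandI_append, ← hAP, ← hXQ, ← hBR]
  · intro j hj
    apply hb j
    rw [hU', hQ₂]
    simp at hj ⊢
    tauto


lemma lift_step {S T : List α} (hS : S.Nodup)
    {U' : List ℕ} (hb : ∀ j ∈ U', j < (blocks S T).length)
    (A : List α) :
    ∀ (X B₂ : List α) (hX : X ≠ []),
    A ++ X ++ B₂ = expandI S T U' →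
    (∀ x y, Adj (A ++ X ++ X ++ B₂) x y → Adj T x y) →
    ∃ V', TDStep U' V' ∧ A ++ X ++ X ++ B₂ = expandI S T V' ∧
      ∀ j ∈ V', j < (blocks S T).length := by
  induction A using List.reverseRecOn with
  | nil =>
    intro X B₂ hX hflat hadj
    -- head X must be a block head
    have hgood : GoodHead S T (X.head hX) := by
      cases U' with
      | nil =>
        exfalso
        apply hX
        have := hflat
        rw [expandI_nil] at this
        simpa using (List.append_eq_nil_iff.mp (by simpa using this)).1
      | cons j rest =>
        have hj : j < (blocks S T).length := hb j (by simp)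
        have hbmem := getD_mem_blocks hj
        have hbne : (blocks S T).getD j [] ≠ [] := blocks_ne_nil hbmem
        have hh : X.head hX = ((blocks S T).getD j []).head hbne := by
          have h1 : (expandI S T (j :: rest)).head? = some (((blocks S T).getD j []).head hbne) := by
            rw [expandI_cons, List.head?_append, List.head?_eq_head hbne]
            rfl
          rw [← hflat] at h1
          simp only [List.nil_append] at h1
          rw [List.head?_append, List.head?_eq_head hX] at h1
          have : (some (X.head hX)).or B₂.head? = some (X.head hX) := rfl
          rw [this] at h1
          injection h1
        rw [hh]
        exact blockhead_good hS hbmem (List.head?_eq_head hbne)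
    exact lift_step_good hS hb [] X B₂ hX hflat hgood hadj
  | append_singleton A₁ a ih =>
    intro X B₂ hX hflat hadj
    by_cases hgood : GoodHead S T (X.head hX)
    · exact lift_step_good hS hb (A₁ ++ [a]) X B₂ hX hflat hgood hadj
    · -- rotation
      rw [GoodHead] at hgood
      push_neg at hgood
      obtain ⟨p, hpadj, hpstab⟩ := hgood
      -- the last letter of X equals p
      have h1 : Adj T (X.getLast hX) (X.head hX) :=
        hadj _ _ (adj_junction (A := A₁ ++ [a]) (Y := X) (X := X) (B₂ := B₂) hX hX)
      have hlast : X.getLast hX = p := stable_pred hpstab h1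
      -- a = p
      have h2 : Adj T a (X.head hX) :=
        hadj _ _ (adj_last_head (A' := A₁) (a := a) (X := X) (R := X) (B₂ := B₂) hX)
      have ha : a = p := stable_pred hpstab h2
      -- rotate
      set X₁ := X.dropLast with hX₁
      have hXeq : X = X₁ ++ [p] := by
        rw [hX₁, ← hlast]
        exact (List.dropLast_append_getLast hX).symm
      have hVeq : A₁ ++ (p :: X₁) ++ (p :: X₁) ++ (p :: B₂)
          = (A₁ ++ [a]) ++ X ++ X ++ B₂ := by
        rw [hXeq, ha]
        simp
      have hUeq : A₁ ++ (p :: X₁) ++ (p :: B₂) = (A₁ ++ [a]) ++ X ++ B₂ := by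
        rw [hXeq, ha]
        simp
      obtain ⟨V', hstep, hexp, hbV⟩ := ih (p :: X₁) (p :: B₂) (List.cons_ne_nil _ _)
        (by rw [hUeq]; exact hflat)
        (fun x y hxy => hadj x y (hVeq ▸ hxy))
      exact ⟨V', hstep, by rw [← hVeq]; exact hexp, hbV⟩


lemma tdk_lift {S T : List α} (hS : S.Nodup) :
    ∀ (m : ℕ) (U : List α) (U' : List ℕ),
    TDk m U T → U = expandI S T U' → (∀ j ∈ U', j < (blocks S T).length) →
    ∃ T' : List ℕ, T = expandI S T T' ∧ (∀ j ∈ T', j < (blocks S T).length) ∧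
      TDk m U' T' ∧ T'.length ≤ U'.length * 2 ^ m := by
  intro m
  induction m with
  | zero =>
    intro U U' hk hUe hb
    exact ⟨U', hk ▸ hUe, hb, rfl, by simp⟩
  | succ n ihn =>
    intro U U' hk hUe hb
    obtain ⟨V, hstep, hkn⟩ := hk
    obtain ⟨A, X, B₂, hX, hU, hV⟩ := hstep
    have hadj : ∀ x y, Adj (A ++ X ++ X ++ B₂) x y → Adj T x y := by
      intro x y hxy
      exact tdk_adj hkn (hV ▸ hxy)
    obtain ⟨V', hstepV, hVe, hbV⟩ := lift_step hS hb A X B₂ hX (by rw [← hU, hUe]) hadj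
    obtain ⟨T', hTe, hbT, hkT, hlen⟩ := ihn V V' hkn (by rw [hV, hVe]) hbV
    refine ⟨T', hTe, hbT, ⟨V', hstepV, hkT⟩, ?_⟩
    have h2 : V'.length ≤ 2 * U'.length := tdstep_length hstepV
    calc T'.length ≤ V'.length * 2 ^ n := hlen
      _ ≤ (2 * U'.length) * 2 ^ n := Nat.mul_le_mul_right _ h2
      _ = U'.length * 2 ^ (n + 1) := by ring


/-! ### boundary pairs -/

/-- The boundary pairs of a list of blocks. -/
def bps : List (List α) → List (α × α)
  | [] => []
  | [_] => []
  | a :: b :: rest =>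
    (match a.getLast?, b.head? with
     | some x, some y => [(x, y)]
     | _, _ => []) ++ bps (b :: rest)

lemma bps_cons_cons {a b : List α} {rest : List (List α)} (ha : a ≠ []) (hb : b ≠ []) :
    bps (a :: b :: rest)
      = (a.getLast ha, b.head hb) :: bps (b :: rest) := by
  rw [bps]
  rw [List.getLast?_eq_getLast ha, List.head?_eq_head hb]
  simp

lemma bps_length : ∀ (G : List (List α)), (∀ b ∈ G, b ≠ []) → G ≠ [] →
    (bps G).length = G.length - 1 := by
  intro G
  induction G with
  | nil => intro _ h; exact absurd rfl h
  | cons a G ih =>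
    intro hne _
    cases G with
    | nil => rfl
    | cons b rest =>
      rw [bps_cons_cons (hne a (by simp)) (hne b (by simp))]
      rw [List.length_cons, ih (fun x hx => hne x (by simp [hx])) (by simp)]
      simp

lemma bps_fst_mem : ∀ (G : List (List α)), (∀ b ∈ G, b ≠ []) →
    ∀ p ∈ bps G, p.1 ∈ G.flatten := by
  intro G
  induction G with
  | nil => intro _ p hp; cases hp
  | cons a G ih =>
    intro hne p hp
    cases G with
    | nil => cases hp
    | cons b rest =>
      rw [bps_cons_cons (hne a (by simp)) (hne b (by simp))] at hp
      rcases List.mem_cons.mp hp with rfl | hp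
      · simp only [List.flatten_cons, List.mem_append]
        exact Or.inl (List.getLast_mem _)
      · have := ih (fun x hx => hne x (by simp [hx])) p hp
        rw [List.flatten_cons]
        simp only [List.mem_append]
        exact Or.inr (by simpa using this)

lemma bps_nodup : ∀ (G : List (List α)), (∀ b ∈ G, b ≠ []) →
    List.Pairwise List.Disjoint G → (bps G).Nodup := by
  intro G
  induction G with
  | nil => intro _ _; exact List.nodup_nil
  | cons a G ih =>
    intro hne hdisj
    cases G with
    | nil => exact List.nodup_nil
    | cons b rest =>
      rw [bps_cons_cons (hne a (by simp)) (hne b (by simp))]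
      rw [List.nodup_cons]
      constructor
      · intro hmem
        have h1 := bps_fst_mem (b :: rest) (fun x hx => hne x (by simp [hx])) _ hmem
        simp only [List.mem_flatten] at h1
        obtain ⟨g, hg, hxg⟩ := h1
        have hd : List.Disjoint a g := (List.pairwise_cons.mp hdisj).1 g hg
        exact hd (List.getLast_mem _) hxg
      · exact ih (fun x hx => hne x (by simp [hx])) (List.pairwise_cons.mp hdisj).2

lemma bps_spec {S T : List α} : ∀ (Pre : List α) (G : List (List α)),
    (∀ b ∈ G, b ≠ []) →
    List.Chain' (fun a b => ∃ (ha : a ≠ []) (hb : b ≠ []),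
      decide (StablePair (a.getLast ha) (b.head hb) T) = false) G →
    S = Pre ++ G.flatten →
    ∀ p ∈ bps G, Adj S p.1 p.2 ∧ ¬StablePair p.1 p.2 T := by
  intro Pre G
  induction G generalizing Pre with
  | nil => intro _ _ _ p hp; cases hp
  | cons a G ih =>
    intro hne hchain hSe p hp
    cases G with
    | nil => cases hp
    | cons b rest =>
      have hane : a ≠ [] := hne a (by simp)
      have hbne : b ≠ [] := hne b (by simp)
      rw [bps_cons_cons hane hbne] at hp
      rcases List.mem_cons.mp hp with rfl | hp
      · constructor
        · refine ⟨Pre ++ a.dropLast, b.tail ++ rest.flatten, ?_⟩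
          rw [hSe]
          simp only [List.flatten_cons]
          conv_lhs => rw [← List.dropLast_append_getLast hane]
          rw [cons_head_tail_append hbne rest.flatten]
          simp
        · obtain ⟨ha', hb', hfalse⟩ := (List.isChain_cons.mp hchain).1 b rfl
          simpa using hfalse
      · refine ih (Pre ++ a) (fun x hx => hne x (by simp [hx]))
          (List.isChain_cons.mp hchain).2 ?_ p hp
        rw [hSe]
        simp

/-! ### the unstable pair witnesses -/

lemma tdk_nil {m : ℕ} {T : List α} (h : TDk m [] T) : T = [] := by
  induction m with
  | zero => exact h.symm
  | succ n ih =>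
    obtain ⟨U, ⟨A, X, B, hX, hU, hV⟩, hk⟩ := h
    exfalso
    apply hX
    have := hU.symm
    simp only [List.append_eq_nil_iff] at this
    exact this.1.2

lemma unstable_witness {S T : List α} (hS : S.Nodup) {m : ℕ} (hk : TDk m S T) :
    ∃ L : List (α × α), L.length ≤ m ∧
      ∀ a b : α, Adj S a b → ¬StablePair a b T →
        (∃ q ∈ L, q.1 = a) ∨ (∃ q ∈ L, q.2 = b) := by
  obtain ⟨L, hL, hLa⟩ := tdk_adj_list hk
  refine ⟨L, hL, fun a b hadj hnstab => ?_⟩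
  rw [StablePair, not_and_or] at hnstab
  rcases hnstab with h1 | h2
  · push_neg at h1
    obtain ⟨C, D, hT, hD⟩ := h1
    cases D with
    | nil =>
      exfalso
      have hlastT : T.getLast? = some a := by
        rw [hT, List.getLast?_append]
        simp
      have hlastS : S.getLast? = some a := (tdk_getLast? hk).trans hlastT
      exact adj_ne_getLast hS hadj hlastS rfl
    | cons c D' =>
      have hcb : c ≠ b := fun hcb => (hD D' (by rw [hcb])).elim
      have hTadj : Adj T a c := ⟨C, D', hT⟩
      rcases hLa a c hTadj with hSadj | hmem
      · exact absurd (succ_unique hS hadj hSadj).symm hcb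
      · exact Or.inl ⟨(a, c), hmem, rfl⟩
  · push_neg at h2
    obtain ⟨C, D, hT, hC⟩ := h2
    rcases C.eq_nil_or_concat with rfl | ⟨C', c, rfl⟩
    · exfalso
      have hheadT : T.head? = some b := by rw [hT]; rfl
      have hheadS : S.head? = some b := (tdk_head? hk).trans hheadT
      exact adj_ne_head hS hadj hheadS rfl
    · have hca : c ≠ a := fun hca => (hC C' (by rw [hca, List.concat_eq_append])).elim
      have hTadj : Adj T c b := ⟨C', D, by simpa using hT⟩
      rcases hLa c b hTadj with hSadj | hmem
      · exact absurd (pred_unique hS hadj hSadj) (Ne.symm hca)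
      · exact Or.inr ⟨(c, b), hmem, rfl⟩


/-! ### cardinality bound -/

lemma bps_le {S T : List α} (hS : S.Nodup) {m : ℕ} (hk : TDk m S T) :
    (bps (blocks S T)).length ≤ 2 * m := by
  classical
  obtain ⟨L, hLlen, hwit⟩ := unstable_witness hS hk
  set l := bps (blocks S T) with hl
  have hblne : ∀ b ∈ blocks S T, b ≠ [] := fun b hb => blocks_ne_nil hb
  have hnd : l.Nodup := by
    apply bps_nodup _ hblne
    have := hS
    rw [← blocks_flatten S T, List.nodup_flatten] at this
    exact this.2
  have hprops : ∀ p ∈ l, Adj S p.1 p.2 ∧ ¬StablePair p.1 p.2 T := by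
    apply bps_spec [] (blocks S T) hblne
      (List.isChain_getLast_head_splitBy (fun a b => decide (StablePair a b T)) S)
    rw [blocks_flatten]
    rfl
  have hex : ∀ p ∈ l, (∃ q ∈ L, q.1 = p.1) ∨ (∃ q ∈ L, q.2 = p.2) := by
    intro p hp
    obtain ⟨h1, h2⟩ := hprops p hp
    exact hwit p.1 p.2 h1 h2
  let f : α × α → (α × α) × Bool := fun p =>
    if h : ∃ q ∈ L, q.1 = p.1 then (h.choose, true)
    else if h2 : ∃ q ∈ L, q.2 = p.2 then (h2.choose, false)
    else (p, true)
  have hcard : l.length = l.toFinset.card := (List.toFinset_card_of_nodup hnd).symm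
  have hmaps : ∀ p ∈ l.toFinset, f p ∈ L.toFinset ×ˢ (Finset.univ : Finset Bool) := by
    intro p hp
    rw [List.mem_toFinset] at hp
    simp only [f]
    split_ifs with h h2
    · exact Finset.mem_product.mpr ⟨List.mem_toFinset.mpr h.choose_spec.1, Finset.mem_univ _⟩
    · exact Finset.mem_product.mpr ⟨List.mem_toFinset.mpr h2.choose_spec.1, Finset.mem_univ _⟩
    · exact absurd (hex p hp) (by simp [h, h2])
  have hinj : Set.InjOn f l.toFinset := by
    intro p hp q hq hfpq
    have hp' : p ∈ l := by simpa using hp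
    have hq' : q ∈ l := by simpa using hq
    by_cases h1 : ∃ r ∈ L, r.1 = p.1 <;> by_cases h2 : ∃ r ∈ L, r.1 = q.1
    · simp only [f, dif_pos h1, dif_pos h2, Prod.mk.injEq] at hfpq
      have e1 : p.1 = q.1 := by
        rw [← h1.choose_spec.2, ← h2.choose_spec.2, hfpq.1]
      have ap : Adj S q.1 p.2 := by rw [← e1]; exact (hprops p hp').1
      have e2 : p.2 = q.2 := succ_unique hS ap (hprops q hq').1
      exact Prod.ext e1 e2
    · exfalso
      have h2q : ∃ r ∈ L, r.2 = q.2 := (hex q hq').resolve_left h2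
      simp only [f, dif_pos h1, dif_neg h2, dif_pos h2q, Prod.mk.injEq] at hfpq
      simp at hfpq
    · exfalso
      have h2p : ∃ r ∈ L, r.2 = p.2 := (hex p hp').resolve_left h1
      simp only [f, dif_neg h1, dif_pos h2p, dif_pos h2, Prod.mk.injEq] at hfpq
      simp at hfpq
    · have h2p : ∃ r ∈ L, r.2 = p.2 := (hex p hp').resolve_left h1
      have h2q : ∃ r ∈ L, r.2 = q.2 := (hex q hq').resolve_left h2
      simp only [f, dif_neg h1, dif_neg h2, dif_pos h2p, dif_pos h2q, Prod.mk.injEq] at hfpq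
      have e2 : p.2 = q.2 := by
        rw [← h2p.choose_spec.2, ← h2q.choose_spec.2, hfpq.1]
      have ap : Adj S p.1 q.2 := by rw [← e2]; exact (hprops p hp').1
      have e1 : p.1 = q.1 := pred_unique hS ap (hprops q hq').1
      exact Prod.ext e1 e2
  have := Finset.card_le_card_of_injOn f hmaps hinj
  rw [Finset.card_product] at this
  have hL2 : L.toFinset.card ≤ L.length := List.toFinset_card_le L
  calc l.length = l.toFinset.card := hcard
    _ ≤ L.toFinset.card * (Finset.univ : Finset Bool).card := this
    _ ≤ L.length * 2 := by
        have : (Finset.univ : Finset Bool).card = 2 := by simp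
        rw [this]
        exact Nat.mul_le_mul_right _ hL2
    _ ≤ 2 * m := by omega


lemma blocks_length_le {S T : List α} (hS : S.Nodup) {m : ℕ} (hk : TDk m S T) :
    (blocks S T).length ≤ 2 * m + 1 := by
  rcases eq_or_ne S [] with rfl | hSne
  · have : blocks ([] : List α) T = [] := List.splitBy_nil _
    simp [this]
  · have hblne : ∀ b ∈ blocks S T, b ≠ [] := fun b hb => blocks_ne_nil hb
    have hBne : blocks S T ≠ [] := by
      intro hB
      apply hSne
      rw [← blocks_flatten S T, hB]
      rfl
    have h1 : (bps (blocks S T)).length = (blocks S T).length - 1 :=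
      bps_length _ hblne hBne
    have h2 := bps_le hS hk
    have h3 : (blocks S T).length ≥ 1 := List.length_pos_iff.mpr hBne
    omega

/-! ### distTD glue -/

lemma distTD_le_of_tdk {S T : List α} {m : ℕ} (h : TDk m S T) :
    distTD S T ≤ (m : ℕ∞) :=
  sInf_le ⟨m, rfl, h⟩

lemma tdk_of_distTD_le {S T : List α} {k : ℕ} (h : distTD S T ≤ (k : ℕ∞)) :
    ∃ m : ℕ, m ≤ k ∧ TDk m S T := by
  have hne : ∃ m : ℕ, TDk m S T := by
    by_contra hcon
    push_neg at hcon
    have hempty : {n : ℕ∞ | ∃ m : ℕ, n = m ∧ TDk m S T} = ∅ := by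
      ext n
      simp only [Set.mem_setOf_eq, Set.mem_empty_iff_false, iff_false]
      rintro ⟨m, rfl, hm⟩
      exact hcon m hm
    rw [distTD, hempty, sInf_empty] at h
    exact (ENat.coe_ne_top k) (top_le_iff.mp h)
  refine ⟨Nat.find hne, ?_, Nat.find_spec hne⟩
  have hle : ((Nat.find hne : ℕ) : ℕ∞) ≤ distTD S T := by
    apply le_sInf
    rintro n ⟨m, rfl, hm⟩
    exact_mod_cast Nat.find_min' hne hm
  exact_mod_cast hle.trans h

/-- Kernelization: replacing each maximal `(S,T)`-stable substring by a single
fresh character (here: its index in `blocks S T`) turns `S` into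
`S' = [0, 1, …, l-1]` and `T` into a string `T'` of block indices whose
expansion is `T`, with `dist_TD(S',T') ≤ k`, `|S'| ≤ 2k + 1` and
`|T'| ≤ (2k + 1)·2^k`. -/
theorem stmt14 (S T : List α) (hS : S.Nodup) (k : ℕ)
    (h : distTD S T ≤ (k : ℕ∞)) :
    ∃ T' : List ℕ,
      T'.flatMap (fun j => (blocks S T).getD j []) = T ∧
      distTD (List.range (blocks S T).length) T' ≤ (k : ℕ∞) ∧
      (List.range (blocks S T).length).length ≤ 2 * k + 1 ∧
      T'.length ≤ (2 * k + 1) * 2 ^ k := by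
  obtain ⟨m, hmk, hTD⟩ := tdk_of_distTD_le h
  rcases eq_or_ne S [] with rfl | hSne
  · have hT : T = [] := tdk_nil hTD
    have hB : blocks ([] : List α) T = [] := List.splitBy_nil _
    refine ⟨[], by simp [hT], ?_, by simp [hB], by simp⟩
    have : TDk 0 (List.range (blocks ([] : List α) T).length) ([] : List ℕ) := by
      simp [hB, TDk]
    calc distTD (List.range (blocks ([] : List α) T).length) [] ≤ (0 : ℕ∞) :=
          distTD_le_of_tdk this
      _ ≤ (k : ℕ∞) := by simp
  · obtain ⟨T', hTe, hbT, hkT, hlen⟩ := tdk_lift hS m S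
      (List.range (blocks S T).length) hTD (expandI_range S T).symm
      (fun j hj => List.mem_range.mp hj)
    have hblen : (blocks S T).length ≤ 2 * m + 1 := blocks_length_le hS hTD
    refine ⟨T', hTe.symm, ?_, ?_, ?_⟩
    · calc distTD (List.range (blocks S T).length) T' ≤ (m : ℕ∞) :=
            distTD_le_of_tdk hkT
        _ ≤ (k : ℕ∞) := by exact_mod_cast hmk
    · rw [List.length_range]
      omega
    · calc T'.length ≤ (List.range (blocks S T).length).length * 2 ^ m := hlen
        _ = (blocks S T).length * 2 ^ m := by rw [List.length_range]
        _ ≤ (2 * m + 1) * 2 ^ m := Nat.mul_le_mul_right _ hblen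
        _ ≤ (2 * k + 1) * 2 ^ k :=
            Nat.mul_le_mul (by omega) (Nat.pow_le_pow_right (by norm_num) hmk)
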